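/- Let 𝒴 be a finite label set, n data points with labels yᵢ, P a probability distribution over hypotheses h : [n] → 𝒴, and ℓ : 𝒴 × 𝒴 → [0,∞) a nonnegative loss. Define y_P(i) = argmax_{y∈𝒴} P[h(i) = y] and γ_P = 1 / min_{i∈[n]} max_{y∈𝒴} P[h(i) = y]. Then for any nonempty W ⊆ Δₙ, sup_{w∈W} ∑ᵢ wᵢ ℓ(y_P(i), yᵢ) ≤ γ_P · sup_{w∈W} ∑ᵢ wᵢ 𝔼_{h∼P}[ℓ(h(i), yᵢ)]. -/
import Mathlib


/-- The deterministic (plurality-vote) ensemble RAI risk is bounded by `γ_P` times the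
randomized ensemble RAI risk. -/
theorem stmt_4 {Y : Type*} [Fintype Y] [Nonempty Y] [DecidableEq Y] (n : ℕ) (hn : 0 < n)
    (yv : Fin n → Y) (P : (Fin n → Y) → ℝ)
    (hPpos : ∀ h, 0 ≤ P h) (hPsum : (∑ h, P h) = 1)
    (ℓ : Y → Y → ℝ) (hℓ : ∀ y' y, 0 ≤ ℓ y' y)
    -- q i y = P[h(i) = y]
    (q : Fin n → Y → ℝ) (hq : ∀ i y, q i y = ∑ h, if h i = y then P h else 0)
    -- yP is a plurality-vote selection (ties broken arbitrarily)
    (yP : Fin n → Y) (hyP : ∀ i y, q i y ≤ q i (yP i))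
    (hpos : ∀ i, 0 < q i (yP i))
    (γ : ℝ)
    (hγ : γ = 1 / (Finset.univ.inf' (Finset.univ_nonempty_iff.mpr ⟨⟨0, hn⟩⟩)
        (fun i => q i (yP i))))
    (W : Set (Fin n → ℝ)) (hWne : W.Nonempty)
    (hWΔ : ∀ w ∈ W, (∀ i, 0 ≤ w i) ∧ (∑ i, w i) = 1) :
    sSup {s : ℝ | ∃ w ∈ W, s = ∑ i, w i * ℓ (yP i) (yv i)}
      ≤ γ * sSup {s : ℝ | ∃ w ∈ W, s = ∑ i, w i * ∑ h, P h * ℓ (h i) (yv i)} := by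
  set m : ℝ := Finset.univ.inf' (Finset.univ_nonempty_iff.mpr ⟨⟨0, hn⟩⟩)
      (fun i => q i (yP i)) with hm
  have hmpos : 0 < m := by
    rw [hm, Finset.lt_inf'_iff]
    exact fun i _ => hpos i
  have hγpos : 0 < γ := by rw [hγ]; positivity
  set E : Fin n → ℝ := fun i => ∑ h, P h * ℓ (h i) (yv i) with hE
  have hEnn : ∀ i, 0 ≤ E i := fun i =>
    Finset.sum_nonneg fun h _ => mul_nonneg (hPpos h) (hℓ _ _)
  -- key pointwise bound
  have key : ∀ i, ℓ (yP i) (yv i) ≤ γ * E i := by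
    intro i
    have h1 : q i (yP i) * ℓ (yP i) (yv i) ≤ E i := by
      rw [hq, Finset.sum_mul]
      apply Finset.sum_le_sum
      intro h _
      by_cases hc : h i = yP i
      · simp [hc]
      · simp only [hc, if_false, zero_mul]
        exact mul_nonneg (hPpos h) (hℓ _ _)
    have h2 : m ≤ q i (yP i) := Finset.inf'_le _ (Finset.mem_univ i)
    have h3 : m * ℓ (yP i) (yv i) ≤ E i :=
      le_trans (mul_le_mul_of_nonneg_right h2 (hℓ _ _)) h1
    have : ℓ (yP i) (yv i) ≤ E i / m := (le_div_iff₀' hmpos).mpr h3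
    rw [hγ]
    calc ℓ (yP i) (yv i) ≤ E i / m := this
      _ = 1 / m * E i := by ring
  -- the RHS set is nonempty and bounded above
  have hBne : {s : ℝ | ∃ w ∈ W, s = ∑ i, w i * E i}.Nonempty := by
    obtain ⟨w, hw⟩ := hWne
    exact ⟨_, w, hw, rfl⟩
  have hBdd : BddAbove {s : ℝ | ∃ w ∈ W, s = ∑ i, w i * E i} := by
    refine ⟨∑ i, E i, ?_⟩
    rintro s ⟨w, hw, rfl⟩
    obtain ⟨hwn, hws⟩ := hWΔ w hw
    apply Finset.sum_le_sum
    intro i _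
    have hwi1 : w i ≤ 1 := by
      rw [← hws]
      exact Finset.single_le_sum (fun j _ => hwn j) (Finset.mem_univ i)
    calc w i * E i ≤ 1 * E i := mul_le_mul_of_nonneg_right hwi1 (hEnn i)
      _ = E i := one_mul _
  apply csSup_le
  · obtain ⟨w, hw⟩ := hWne
    exact ⟨_, w, hw, rfl⟩
  rintro s ⟨w, hw, rfl⟩
  obtain ⟨hwn, hws⟩ := hWΔ w hw
  have step1 : ∑ i, w i * ℓ (yP i) (yv i) ≤ γ * ∑ i, w i * E i := by
    rw [Finset.mul_sum]
    apply Finset.sum_le_sum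
    intro i _
    calc w i * ℓ (yP i) (yv i) ≤ w i * (γ * E i) :=
          mul_le_mul_of_nonneg_left (key i) (hwn i)
      _ = γ * (w i * E i) := by ring
  refine le_trans step1 ?_
  apply mul_le_mul_of_nonneg_left _ hγpos.le
  exact le_csSup hBdd ⟨w, hw, rfl⟩
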